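/- Griffiths' second inequality for Ising lattice gauge theory: for every β ≥ 0, every N ≥ 1 and all loops γ₁, γ₂ supported in B_N (with 𝒞_{γ₁}, 𝒞_{γ₂} nonempty), E_{N,β}[W_{γ₁} W_{γ₂}] ≥ E_{N,β}[W_{γ₁}] · E_{N,β}[W_{γ₂}]. -/
import Mathlib


open scoped Classical

namespace LGT

/-- A site (vertex) of the lattice `ℤ^m`. -/
abbrev Site (m : ℕ) := Fin m → ℤ

/-- The `i`-th unit vector. -/
def unitVec (m : ℕ) (i : Fin m) : Site m := fun j => if j = i then 1 else 0

/-- An oriented nearest-neighbour edge of `ℤ^m`: it joins `base` and `base + e_dir`,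
oriented from `base` to `base + e_dir` when `ori = true`, and oppositely otherwise. -/
structure OEdge (m : ℕ) where
  base : Site m
  dir : Fin m
  ori : Bool
deriving DecidableEq

/-- An oriented plaquette of `ℤ^m` (valid when `dir1 < dir2`): the unit square with
corners `base, base + e_dir1, base + e_dir2, base + e_dir1 + e_dir2`, positively
oriented when `ori = true`. -/
structure OPlaq (m : ℕ) where
  base : Site m
  dir1 : Fin m
  dir2 : Fin m
  ori : Bool
deriving DecidableEq

/-- The same edge with reversed orientation. -/
def OEdge.neg {m : ℕ} (e : OEdge m) : OEdge m := ⟨e.base, e.dir, !e.ori⟩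

/-- The same plaquette with reversed orientation. -/
def OPlaq.neg {m : ℕ} (p : OPlaq m) : OPlaq m := ⟨p.base, p.dir1, p.dir2, !p.ori⟩

/-- The source vertex of an oriented edge. -/
def OEdge.src {m : ℕ} (e : OEdge m) : Site m :=
  if e.ori then e.base else e.base + unitVec m e.dir

/-- The target vertex of an oriented edge. -/
def OEdge.tgt {m : ℕ} (e : OEdge m) : Site m :=
  if e.ori then e.base + unitVec m e.dir else e.base

/-- `x ∈ B_N = [-N,N]^m ∩ ℤ^m`. -/
def inBox (m N : ℕ) (x : Site m) : Prop := ∀ i, |x i| ≤ (N : ℤ)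

/-- `C_1(B_N)`: oriented edges with both endpoints in `B_N`. -/
def C1 (m N : ℕ) : Set (OEdge m) :=
  {e | inBox m N e.base ∧ inBox m N (e.base + unitVec m e.dir)}

/-- The four corners of a plaquette. -/
def OPlaq.corners {m : ℕ} (p : OPlaq m) : List (Site m) :=
  [p.base, p.base + unitVec m p.dir1, p.base + unitVec m p.dir2,
    p.base + unitVec m p.dir1 + unitVec m p.dir2]

/-- The four oriented boundary edges of an oriented plaquette. -/
def OPlaq.bdry {m : ℕ} (p : OPlaq m) : List (OEdge m) :=
  let l : List (OEdge m) :=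
    [⟨p.base, p.dir1, true⟩, ⟨p.base + unitVec m p.dir1, p.dir2, true⟩,
     ⟨p.base + unitVec m p.dir2, p.dir1, false⟩, ⟨p.base, p.dir2, false⟩]
  if p.ori then l else l.map OEdge.neg

/-- `C_2(B_N)`: oriented plaquettes with all corners in `B_N`. -/
def C2 (m N : ℕ) : Set (OPlaq m) :=
  {p | p.dir1 < p.dir2 ∧ ∀ x ∈ p.corners, inBox m N x}

/-- `C_2(B_N)^+`: positively oriented plaquettes of `C_2(B_N)`. -/
def C2plus (m N : ℕ) : Set (OPlaq m) := {p | p ∈ C2 m N ∧ p.ori = true}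

/-- `supp ∂̂e`: the plaquettes of `C_2(B_N)` whose oriented boundary contains `e`. -/
def cob (m N : ℕ) (e : OEdge m) : Set (OPlaq m) := {p | p ∈ C2 m N ∧ e ∈ p.bdry}

/-- A loop: a finitely supported `ℤ`-valued function on oriented edges with values in
`{-1,0,1}`, odd under orientation reversal, whose boundary vanishes as a `0`-chain. -/
structure IsLoop (m : ℕ) (γ : OEdge m → ℤ) : Prop where
  finite_supp : (Function.support γ).Finite
  vals : ∀ e, γ e = -1 ∨ γ e = 0 ∨ γ e = 1
  antisym : ∀ e, γ (OEdge.neg e) = - γ e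
  bdry_zero : ∀ v : Site m,
    (∑ᶠ e : OEdge m, γ e *
      ((if OEdge.tgt e = v then 1 else 0) - (if OEdge.src e = v then (1 : ℤ) else 0))) = 0

/-- A loop supported in `B_N`. -/
def LoopIn (m N : ℕ) (γ : OEdge m → ℤ) : Prop :=
  IsLoop m γ ∧ ∀ e, γ e ≠ 0 → e ∈ C1 m N

/-- `Ω^1(B_N, ℤ₂)`: `ℤ₂`-valued one-forms on `C_1(B_N)`. -/
def Omega1 (m N : ℕ) : Set (OEdge m → ZMod 2) :=
  {σ | (∀ e, e ∉ C1 m N → σ e = 0) ∧ ∀ e, σ (OEdge.neg e) = - σ e}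

/-- The natural representation `ρ(g) = e^{iπ g} ∈ {±1}` of `ℤ₂`. -/
noncomputable def rho (g : ZMod 2) : ℝ := if g = 0 then 1 else -1

/-- The exterior derivative `dσ(p) = Σ_{e ∈ ∂p} σ(e)`. -/
def dOne {m : ℕ} (σ : OEdge m → ZMod 2) (p : OPlaq m) : ZMod 2 := (p.bdry.map σ).sum

/-- The Wilson action `S(σ) = -Σ_{p ∈ C_2(B_N)} ρ(dσ(p))`. -/
noncomputable def action (m N : ℕ) (σ : OEdge m → ZMod 2) : ℝ :=
  - ∑ᶠ p ∈ C2 m N, rho (dOne σ p)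

/-- The Wilson loop variable `W_γ(σ) = Π_{e ∈ (supp γ)^+} ρ(σ(e))`. -/
noncomputable def wilson (m : ℕ) (γ : OEdge m → ℤ) (σ : OEdge m → ZMod 2) : ℝ :=
  ∏ᶠ e ∈ {e : OEdge m | γ e ≠ 0 ∧ e.ori = true}, rho (σ e)

/-- `Z_{β,N}[γ] = Σ_{σ ∈ Ω^1(B_N,ℤ₂)} W_γ(σ) e^{-β S(σ)}`. -/
noncomputable def Z (m N : ℕ) (β : ℝ) (γ : OEdge m → ℤ) : ℝ :=
  ∑ᶠ σ ∈ Omega1 m N, wilson m γ σ * Real.exp (- β * action m N σ)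

/-- The finite-volume Gibbs expectation `E_{N,β}[f]`. -/
noncomputable def Eexp (m N : ℕ) (β : ℝ) (f : (OEdge m → ZMod 2) → ℝ) : ℝ :=
  (∑ᶠ σ ∈ Omega1 m N, f σ * Real.exp (- β * action m N σ)) /
    (∑ᶠ σ ∈ Omega1 m N, Real.exp (- β * action m N σ))

/-- `E_{N,β}[W_γ]`. -/
noncomputable def Ewilson (m N : ℕ) (β : ℝ) (γ : OEdge m → ℤ) : ℝ :=
  Eexp m N β (wilson m γ)

/-- A current: an integer-valued `2`-form on `C_2(B_N)` that is nonnegative on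
positively oriented plaquettes. -/
def IsCurrent (m N : ℕ) (n : OPlaq m → ℤ) : Prop :=
  (∀ p, p ∉ C2 m N → n p = 0) ∧ (∀ p, n (OPlaq.neg p) = - n p) ∧
    (∀ p ∈ C2plus m N, 0 ≤ n p)

/-- `𝒞_γ`: the currents with source `γ`. -/
def CurSet (m N : ℕ) (γ : OEdge m → ℤ) : Set (OPlaq m → ℤ) :=
  {n | IsCurrent m N n ∧ ∀ e ∈ C1 m N,
      ((γ e : ZMod 2) + ∑ᶠ p ∈ cob m N e, ((n p : ZMod 2))) = 0}

/-- The weight `w_β(n) = Π_{p ∈ C_2(B_N)^+} (2β)^{n(p)}/n(p)!` of a current. -/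
noncomputable def wgt (m N : ℕ) (β : ℝ) (n : OPlaq m → ℤ) : ℝ :=
  ∏ᶠ p ∈ C2plus m N, (2 * β) ^ (n p).toNat / (Nat.factorial (n p).toNat)

/-- `q ≤ n` on positively oriented plaquettes. -/
def leOn (m N : ℕ) (q n : OPlaq m → ℤ) : Prop := ∀ p ∈ C2plus m N, q p ≤ n p

/-- `𝒫_γ^{ht}`: `ℤ₂`-valued `2`-forms on `C_2(B_N)` with `δω = γ (mod 2)`. -/
def HTset (m N : ℕ) (γ : OEdge m → ℤ) : Set (OPlaq m → ZMod 2) :=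
  {ω | (∀ p, p ∉ C2 m N → ω p = 0) ∧ (∀ p, ω (OPlaq.neg p) = - ω p) ∧
    ∀ e ∈ C1 m N, (∑ᶠ p ∈ cob m N e, ω p) = (γ e : ZMod 2)}

/-- `(supp ω)^+`. -/
def suppPlus (m N : ℕ) (ω : OPlaq m → ZMod 2) : Set (OPlaq m) :=
  {p | p ∈ C2plus m N ∧ ω p ≠ 0}

/-- The high-temperature weight `(tanh 2β)^{|(supp ω)^+|}`. -/
noncomputable def htWeight (m N : ℕ) (β : ℝ) (ω : OPlaq m → ZMod 2) : ℝ :=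
  Real.tanh (2 * β) ^ (Nat.card ↥(suppPlus m N ω))

/-- The high-temperature model `P^γ_{B_N,β}`: probability mass of `ω ∈ 𝒫_γ^{ht}`. -/
noncomputable def htProb (m N : ℕ) (β : ℝ) (γ : OEdge m → ℤ) (ω : OPlaq m → ZMod 2) : ℝ :=
  htWeight m N β ω / ∑ᶠ ω' ∈ HTset m N γ, htWeight m N β ω'

/-- The random current model `𝐏^γ_{B_N,β}`: probability of an event `A ⊆ 𝒞_γ`. -/
noncomputable def rcProb (m N : ℕ) (β : ℝ) (γ : OEdge m → ℤ) (A : Set (OPlaq m → ℤ)) : ℝ :=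
  (∑' n : ↥(CurSet m N γ ∩ A), wgt m N β n) / (∑' n : ↥(CurSet m N γ), wgt m N β n)

/-- The trace `n̂` of a current: the set of positively oriented plaquettes where `n > 0`. -/
def hatCur (m N : ℕ) (n : OPlaq m → ℤ) : Set (OPlaq m) :=
  {p | p ∈ C2plus m N ∧ 0 < n p}

/-- The probability that iid Bernoulli plaquette percolation `Ψ_q` on `C_2(B_N)^+`
produces exactly the configuration (subset) `A`. -/
noncomputable def bernoulli (m N : ℕ) (q : ℝ) (A : Set (OPlaq m)) : ℝ :=
  ∏ᶠ p ∈ C2plus m N, (if p ∈ A then q else 1 - q)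

/-- `∂P ≡ γ (mod 2)`: for every edge `e ∈ C_1(B_N)` the number of plaquettes of `P`
whose boundary contains `e` or `-e` is congruent to `γ(e)` mod `2`. -/
def BdryCong (m N : ℕ) (P : Set (OPlaq m)) (γ : OEdge m → ℤ) : Prop :=
  ∀ e ∈ C1 m N,
    ((Nat.card ↥{p ∈ P | e ∈ p.bdry ∨ OEdge.neg e ∈ p.bdry} : ZMod 2)) = (γ e : ZMod 2)

/-- `𝒫_γ`: subsets of `C_2(B_N)^+` containing a subset with boundary `γ (mod 2)`. -/
def PlaqSet (m N : ℕ) (γ : OEdge m → ℤ) : Set (Set (OPlaq m)) :=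
  {P | P ⊆ C2plus m N ∧ ∃ P', P' ⊆ P ∧ BdryCong m N P' γ}

/-- `N₀(P)`: the number of `σ ∈ Ω^1(B_N,ℤ₂)` with `dσ(p) = 0` for all `p ∈ P`. -/
noncomputable def N0 (m N : ℕ) (P : Set (OPlaq m)) : ℕ :=
  Nat.card ↥{σ ∈ Omega1 m N | ∀ p ∈ P, dOne σ p = 0}

/-- The random cluster weight `N₀(P) q^{|P|} (1-q)^{|C_2(B_N)^+ ∖ P|}`. -/
noncomputable def rcmWeight (m N : ℕ) (q : ℝ) (P : Set (OPlaq m)) : ℝ :=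
  (N0 m N P : ℝ) * q ^ (Nat.card ↥P) * (1 - q) ^ (Nat.card ↥(C2plus m N \ P))

/-- The random cluster model `φ^γ_{B_N,q}`: probability mass of `P` (zero off `𝒫_γ`). -/
noncomputable def rcmProb (m N : ℕ) (q : ℝ) (γ : OEdge m → ℤ) (P : Set (OPlaq m)) : ℝ :=
  (if P ∈ PlaqSet m N γ then rcmWeight m N q P else 0) /
    ∑ᶠ P' ∈ PlaqSet m N γ, rcmWeight m N q P'

/-- `S_γ(P)`: the subsets of `P` with boundary `γ (mod 2)`. -/
def Sset (m N : ℕ) (γ : OEdge m → ℤ) (P : Set (OPlaq m)) : Set (Set (OPlaq m)) :=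
  {P' | P' ⊆ P ∧ BdryCong m N P' γ}

/-- The `ℤ₂`-valued `2`-form whose support among positively oriented plaquettes is `P'`. -/
noncomputable def formOf {m : ℕ} (P' : Set (OPlaq m)) : OPlaq m → ZMod 2 :=
  fun p => if p ∈ P' ∨ OPlaq.neg p ∈ P' then 1 else 0

/-- The vertices of the support of a loop. -/
def vertsOf (m : ℕ) (γ : OEdge m → ℤ) : Set (Site m) :=
  {x | ∃ e, γ e ≠ 0 ∧ (x = OEdge.src e ∨ x = OEdge.tgt e)}

/-- The graph (`ℓ¹`) distance between two sites of `ℤ^m`. -/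
def distL1 (m : ℕ) (x y : Site m) : ℕ := ∑ i, (x i - y i).natAbs

/-- The minimal graph distance between the supports of two loops. -/
noncomputable def suppDist (m : ℕ) (γ γ' : OEdge m → ℤ) : ℕ :=
  sInf {d | ∃ x ∈ vertsOf m γ, ∃ y ∈ vertsOf m γ', d = distL1 m x y}

/-- `area(γ) = min_{n ∈ 𝒞_γ} Σ_{p ∈ C_2(B_N)^+} n(p)`. -/
noncomputable def areaOf (m N : ℕ) (γ : OEdge m → ℤ) : ℕ :=
  sInf {k : ℕ | ∃ n ∈ CurSet m N γ, (∑ᶠ p ∈ C2plus m N, n p) = (k : ℤ)}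

/-- Translation of a loop by a lattice vector. -/
def translate (m : ℕ) (v : Site m) (γ : OEdge m → ℤ) : OEdge m → ℤ :=
  fun e => γ ⟨e.base - v, e.dir, e.ori⟩

/-- The site `a·e₀ + b·e₁` in the fixed coordinate plane spanned by the first two
coordinate directions. -/
def planeSite (m : ℕ) (h : 1 < m) (a b : ℤ) : Site m :=
  fun j => if j = (⟨0, by omega⟩ : Fin m) then a else if j = (⟨1, h⟩ : Fin m) then b else 0

/-- The axis-parallel rectangular loop `γ_{R,T}` with corners `0, R·e₀, R·e₀+T·e₁, T·e₁`
in the fixed coordinate plane spanned by the first two coordinate directions. -/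
noncomputable def rectLoop (m : ℕ) (h : 1 < m) (R T : ℕ) : OEdge m → ℤ := fun e =>
  (∑ k ∈ Finset.range R,
    ((if e = ⟨planeSite m h k 0, ⟨0, by omega⟩, true⟩ then (1 : ℤ) else 0)
      - (if e = OEdge.neg ⟨planeSite m h k 0, ⟨0, by omega⟩, true⟩ then 1 else 0)
      - (if e = ⟨planeSite m h k T, ⟨0, by omega⟩, true⟩ then 1 else 0)
      + (if e = OEdge.neg ⟨planeSite m h k T, ⟨0, by omega⟩, true⟩ then 1 else 0)))
  + (∑ k ∈ Finset.range T,
    ((if e = ⟨planeSite m h R k, ⟨1, h⟩, true⟩ then (1 : ℤ) else 0)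
      - (if e = OEdge.neg ⟨planeSite m h R k, ⟨1, h⟩, true⟩ then 1 else 0)
      - (if e = ⟨planeSite m h 0 k, ⟨1, h⟩, true⟩ then 1 else 0)
      + (if e = OEdge.neg ⟨planeSite m h 0 k, ⟨1, h⟩, true⟩ then 1 else 0)))


section GriffithsAbstract
set_option linter.unusedSectionVars false

variable {G : Type*} [AddCommGroup G] [Fintype G]

def IsChar (c : G → ℝ) : Prop :=
  (∀ x, c x = 1 ∨ c x = -1) ∧ ∀ x y, c (x + y) = c x * c y

lemma IsChar.mul {c d : G → ℝ} (hc : IsChar c) (hd : IsChar d) :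
    IsChar (fun x => c x * d x) := by
  refine ⟨fun x => ?_, fun x y => ?_⟩
  · rcases hc.1 x with h | h <;> rcases hd.1 x with h' | h' <;> simp [h, h']
  · show c (x+y) * d (x+y) = _
    rw [hc.2, hd.2]; ring

lemma char_sum_nonneg {c : G → ℝ} (hc : IsChar c) : 0 ≤ ∑ x : G, c x := by
  by_cases h : ∀ x, c x = 1
  · simp only [h]
    positivity
  · push_neg at h
    obtain ⟨x₀, hx₀⟩ := h
    have hx0 : c x₀ = -1 := (hc.1 x₀).resolve_left hx₀
    have key : ∑ x : G, c x = ∑ x : G, c (x₀ + x) :=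
      (Fintype.sum_equiv (Equiv.addLeft x₀) _ _ (fun x => by simp)).symm
    have hneg : ∀ x : G, c (x₀ + x) = -(c x) := fun x => by rw [hc.2, hx0]; ring
    have h2 : (∑ x : G, c x) + ∑ x : G, c x = 0 := by
      nth_rewrite 1 [key]
      rw [← Finset.sum_add_distrib]
      exact Finset.sum_eq_zero (fun x _ => by rw [hneg]; ring)
    linarith

lemma griffithsI {ι : Type*} (s : Finset ι) (K : ι → ℝ) (hK : ∀ i ∈ s, 0 ≤ K i)
    (c : ι → G → ℝ) (hc : ∀ i ∈ s, IsChar (c i)) :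
    ∀ c₀ : G → ℝ, IsChar c₀ →
      0 ≤ ∑ x : G, c₀ x * ∏ i ∈ s, Real.exp (K i * c i x) := by
  induction s using Finset.induction with
  | empty => intro c₀ h₀; simpa using char_sum_nonneg h₀
  | @insert a s ha ih =>
    intro c₀ h₀
    have hKa : 0 ≤ K a := hK a (Finset.mem_insert_self a s)
    have hca : IsChar (c a) := hc a (Finset.mem_insert_self a s)
    have hK' : ∀ i ∈ s, 0 ≤ K i := fun i hi => hK i (Finset.mem_insert_of_mem hi)
    have hc' : ∀ i ∈ s, IsChar (c i) := fun i hi => hc i (Finset.mem_insert_of_mem hi)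
    have expand : ∀ x : G,
        c₀ x * ∏ i ∈ insert a s, Real.exp (K i * c i x)
          = Real.cosh (K a) * (c₀ x * ∏ i ∈ s, Real.exp (K i * c i x))
            + Real.sinh (K a) * ((c₀ x * c a x) * ∏ i ∈ s, Real.exp (K i * c i x)) := by
      intro x
      rw [Finset.prod_insert ha]
      have : Real.exp (K a * c a x) = Real.cosh (K a) + Real.sinh (K a) * c a x := by
        rcases hca.1 x with h | h
        · rw [h]; simp [Real.cosh_add_sinh]
        · rw [h, mul_neg_one,
            show Real.cosh (K a) + Real.sinh (K a) * (-1)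
              = Real.cosh (K a) - Real.sinh (K a) by ring]
          exact (Real.cosh_sub_sinh (K a)).symm
      rw [this]; ring
    rw [Finset.sum_congr rfl (fun x _ => expand x), Finset.sum_add_distrib,
      ← Finset.mul_sum, ← Finset.mul_sum]
    have h1 := ih hK' hc' c₀ h₀
    have h2 := ih hK' hc' _ (h₀.mul hca)
    have := Real.cosh_pos (x := K a)
    have := Real.sinh_nonneg_iff.mpr hKa
    nlinarith

lemma griffithsII {ι : Type*} (s : Finset ι) (K : ι → ℝ) (hK : ∀ i ∈ s, 0 ≤ K i)
    (c : ι → G → ℝ) (hc : ∀ i ∈ s, IsChar (c i)) (cB cC : G → ℝ)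
    (hB : IsChar cB) (hC : IsChar cC) :
    (∑ x : G, cB x * ∏ i ∈ s, Real.exp (K i * c i x)) *
      (∑ x : G, cC x * ∏ i ∈ s, Real.exp (K i * c i x))
    ≤ (∑ x : G, cB x * cC x * ∏ i ∈ s, Real.exp (K i * c i x)) *
      (∑ x : G, ∏ i ∈ s, Real.exp (K i * c i x)) := by
  set w : G → ℝ := fun x => ∏ i ∈ s, Real.exp (K i * c i x) with hw
  have key : (∑ x : G, cB x * cC x * w x) * (∑ x : G, w x)
      - (∑ x : G, cB x * w x) * (∑ x : G, cC x * w x)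
      = ∑ z : G, (1 - cC z) *
          ∑ x : G, (cB x * cC x) * ∏ i ∈ s, Real.exp ((K i * (1 + c i z)) * c i x) := by
    rw [Finset.sum_mul_sum, Finset.sum_mul_sum, ← Finset.sum_sub_distrib]
    have step1 : ∀ x : G,
        (∑ y : G, cB x * cC x * w x * w y) - ∑ y : G, cB x * w x * (cC y * w y)
        = ∑ z : G, (1 - cC z) * ((cB x * cC x) * (w x * w (x + z))) := by
      intro x
      have subst : ∑ y : G, cB x * w x * (cC y * w y)
          = ∑ z : G, cB x * w x * (cC (x + z) * w (x + z)) :=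
        (Fintype.sum_equiv (Equiv.addLeft x) _ _ (fun z => by simp)).symm
      have subst2 : ∑ y : G, cB x * cC x * w x * w y
          = ∑ z : G, cB x * cC x * w x * w (x + z) :=
        (Fintype.sum_equiv (Equiv.addLeft x) _ _ (fun z => by simp)).symm
      rw [subst, subst2, ← Finset.sum_sub_distrib]
      refine Finset.sum_congr rfl (fun z _ => ?_)
      rw [hC.2 x z]; ring
    rw [Finset.sum_congr rfl (fun x _ => step1 x), Finset.sum_comm]
    refine Finset.sum_congr rfl (fun z _ => ?_)
    rw [Finset.mul_sum]
    refine Finset.sum_congr rfl (fun x _ => ?_)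
    have : w x * w (x + z) = ∏ i ∈ s, Real.exp ((K i * (1 + c i z)) * c i x) := by
      rw [hw]
      simp only [← Finset.prod_mul_distrib, ← Real.exp_add]
      refine Finset.prod_congr rfl (fun i hi => ?_)
      rw [(hc i hi).2 x z]; ring_nf
    rw [this]
  have nn : 0 ≤ ∑ z : G, (1 - cC z) *
      ∑ x : G, (cB x * cC x) * ∏ i ∈ s, Real.exp ((K i * (1 + c i z)) * c i x) := by
    refine Finset.sum_nonneg (fun z _ => mul_nonneg ?_ ?_)
    · rcases hC.1 z with h | h <;> rw [h] <;> norm_num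
    · refine griffithsI s _ (fun i hi => ?_) c hc _ (hB.mul hC)
      have := hK i hi
      rcases (hc i hi).1 z with h | h <;> rw [h] <;> nlinarith
  linarith


end GriffithsAbstract

section Bridge

lemma box_finite (m N : ℕ) : {x : Site m | inBox m N x}.Finite := by
  have hsub : {x : Site m | inBox m N x} ⊆
      Set.pi Set.univ (fun _ : Fin m => Set.Icc (-(N : ℤ)) (N : ℤ)) := by
    intro x hx i _
    exact abs_le.mp (hx i)
  exact (Set.Finite.pi (fun _ => Set.finite_Icc _ _)).subset hsub

lemma C1_finite (m N : ℕ) : (C1 m N).Finite := by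
  apply Set.Finite.of_finite_image (f := fun e : OEdge m => (e.base, e.dir, e.ori))
  · refine Set.Finite.subset
      (((box_finite m N).prod (Set.finite_univ.prod Set.finite_univ))) ?_
    rintro x ⟨e, he, rfl⟩
    exact ⟨he.1, trivial, trivial⟩
  · intro e _ e' _ h
    cases e; cases e'
    simpa using h

lemma C2_finite (m N : ℕ) : (C2 m N).Finite := by
  apply Set.Finite.of_finite_image
    (f := fun p : OPlaq m => (p.base, p.dir1, p.dir2, p.ori))
  · refine Set.Finite.subset
      (((box_finite m N).prod
        (Set.finite_univ.prod (Set.finite_univ.prod Set.finite_univ)))) ?_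
    rintro x ⟨p, hp, rfl⟩
    exact ⟨hp.2 p.base (by simp [OPlaq.corners]), trivial, trivial, trivial⟩
  · intro p _ p' _ h
    cases p; cases p'
    simpa using h

lemma omega1_finite (m N : ℕ) : (Omega1 m N).Finite := by
  haveI := (C1_finite m N).to_subtype
  rw [← Set.finite_coe_iff]
  refine Finite.of_injective
    (fun σ : ↥(Omega1 m N) => (fun e : ↥(C1 m N) => σ.1 e.1)) ?_
  intro σ τ h
  apply Subtype.ext
  funext e
  by_cases he : e ∈ C1 m N
  · exact congrFun h ⟨e, he⟩
  · rw [σ.2.1 e he, τ.2.1 e he]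

/-- `Ω^1(B_N, ℤ₂)` as an additive subgroup of all `ℤ₂`-valued functions on edges. -/
def omegaSub (m N : ℕ) : AddSubgroup (OEdge m → ZMod 2) where
  carrier := Omega1 m N
  zero_mem' := ⟨fun _ _ => rfl, fun e => by simp⟩
  add_mem' := by
    rintro a b ⟨ha1, ha2⟩ ⟨hb1, hb2⟩
    refine ⟨fun e he => ?_, fun e => ?_⟩
    · show a e + b e = 0
      rw [ha1 e he, hb1 e he, add_zero]
    · show a (OEdge.neg e) + b (OEdge.neg e) = -(a e + b e)
      rw [ha2 e, hb2 e]; ring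
  neg_mem' := by
    rintro a ⟨ha1, ha2⟩
    refine ⟨fun e he => ?_, fun e => ?_⟩
    · show -(a e) = 0
      rw [ha1 e he, neg_zero]
    · show -(a (OEdge.neg e)) = -(-(a e))
      rw [ha2 e]

lemma mem_omegaSub {m N : ℕ} {σ : OEdge m → ZMod 2} :
    σ ∈ omegaSub m N ↔ σ ∈ Omega1 m N := Iff.rfl

lemma zmod2_cases : ∀ a : ZMod 2, a = 0 ∨ a = 1 := by decide

lemma rho_vals (a : ZMod 2) : rho a = 1 ∨ rho a = -1 := by
  rcases zmod2_cases a with h | h <;> simp [rho, h]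

lemma rho_add (a b : ZMod 2) : rho (a + b) = rho a * rho b := by
  have h2 : (1 + 1 : ZMod 2) = 0 := by decide
  rcases zmod2_cases a with rfl | rfl <;> rcases zmod2_cases b with rfl | rfl
  · norm_num [rho]
  · norm_num [rho]
  · norm_num [rho]
  · rw [h2]; norm_num [rho]

lemma list_sum_map_add {α : Type*} (l : List α) (f g : α → ZMod 2) :
    (l.map (fun x => f x + g x)).sum = (l.map f).sum + (l.map g).sum := by
  induction l with
  | nil => simp
  | cons a l ih => simp [ih]; ring

lemma dOne_add {m : ℕ} (σ τ : OEdge m → ZMod 2) (p : OPlaq m) :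
    dOne (σ + τ) p = dOne σ p + dOne τ p := by
  simp only [dOne]
  exact list_sum_map_add p.bdry σ τ

lemma prod_pm {α : Type*} (s : Finset α) (f : α → ℝ)
    (h : ∀ a ∈ s, f a = 1 ∨ f a = -1) :
    (∏ a ∈ s, f a) = 1 ∨ (∏ a ∈ s, f a) = -1 := by
  classical
  induction s using Finset.induction with
  | empty => simp
  | @insert a s ha ih =>
    rw [Finset.prod_insert ha]
    rcases h a (Finset.mem_insert_self a s) with h1 | h1 <;>
      rcases ih (fun b hb => h b (Finset.mem_insert_of_mem hb)) with h2 | h2 <;>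
      rw [h1, h2] <;> norm_num

lemma wilson_prod {m : ℕ} (γ : OEdge m → ℤ)
    (hS : ({e : OEdge m | γ e ≠ 0 ∧ e.ori = true}).Finite) (σ : OEdge m → ZMod 2) :
    wilson m γ σ = ∏ e ∈ hS.toFinset, rho (σ e) := by
  rw [wilson, finprod_mem_eq_finite_toFinset_prod _ hS]

lemma exp_action (m N : ℕ) (β : ℝ) (σ : OEdge m → ZMod 2) :
    Real.exp (-β * action m N σ)
      = ∏ p ∈ (C2_finite m N).toFinset, Real.exp (β * rho (dOne σ p)) := by
  rw [action, finsum_mem_eq_finite_toFinset_sum _ (C2_finite m N),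
    neg_mul_neg, Finset.mul_sum, Real.exp_sum]

lemma sum_omega (m N : ℕ) (f : (OEdge m → ZMod 2) → ℝ)
    [F : Fintype ↥(omegaSub m N)] :
    (∑ᶠ σ ∈ Omega1 m N, f σ) = ∑ σ : ↥(omegaSub m N), f ↑σ := by
  rw [finsum_mem_eq_finite_toFinset_sum _ (omega1_finite m N)]
  exact Finset.sum_subtype _ (fun x => by
    rw [Set.Finite.mem_toFinset]; exact mem_omegaSub.symm) f

end Bridge

/-- **Griffiths' second inequality** for Ising lattice gauge theory (Proposition 7(i)). -/
theorem griffiths_second (m N : ℕ) (hm : 3 ≤ m) (hN : 1 ≤ N) (β : ℝ) (hβ : 0 ≤ β)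
    (γ₁ γ₂ : OEdge m → ℤ) (h₁ : LoopIn m N γ₁) (h₂ : LoopIn m N γ₂)
    (hne₁ : (CurSet m N γ₁).Nonempty) (hne₂ : (CurSet m N γ₂).Nonempty) :
    Eexp m N β (fun σ => wilson m γ₁ σ * wilson m γ₂ σ)
      ≥ Ewilson m N β γ₁ * Ewilson m N β γ₂ := by
  classical
  haveI : Finite ↥(omegaSub m N) := by
    haveI := (omega1_finite m N).to_subtype
    exact Finite.of_injective (fun x : ↥(omegaSub m N) => (⟨x.1, x.2⟩ : ↥(Omega1 m N)))
      (fun a b h => Subtype.ext (congrArg Subtype.val h))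
  letI : Fintype ↥(omegaSub m N) := Fintype.ofFinite _
  set G := ↥(omegaSub m N) with hG
  have hS1 : ({e : OEdge m | γ₁ e ≠ 0 ∧ e.ori = true}).Finite :=
    h₁.1.finite_supp.subset (fun e he => he.1)
  have hS2 : ({e : OEdge m | γ₂ e ≠ 0 ∧ e.ori = true}).Finite :=
    h₂.1.finite_supp.subset (fun e he => he.1)
  have coe_add : ∀ σ τ : G, (↑(σ + τ) : OEdge m → ZMod 2) = ↑σ + ↑τ := fun _ _ => rfl
  have hchar : ∀ p : OPlaq m, IsChar (fun σ : G => rho (dOne σ.1 p)) := by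
    intro p
    refine ⟨fun σ => rho_vals _, fun σ τ => ?_⟩
    show rho (dOne ((σ + τ : G) : OEdge m → ZMod 2) p) = _
    rw [coe_add, dOne_add, rho_add]
  have hwchar : ∀ (γ : OEdge m → ℤ)
      (hS : ({e : OEdge m | γ e ≠ 0 ∧ e.ori = true}).Finite),
      IsChar (fun σ : G => wilson m γ σ.1) := by
    intro γ hS
    constructor
    · intro σ
      show wilson m γ σ.1 = 1 ∨ wilson m γ σ.1 = -1
      rw [wilson_prod γ hS]
      exact prod_pm _ _ (fun e _ => rho_vals _)
    · intro σ τ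
      show wilson m γ ((σ + τ : G) : OEdge m → ZMod 2)
        = wilson m γ σ.1 * wilson m γ τ.1
      rw [coe_add, wilson_prod γ hS, wilson_prod γ hS, wilson_prod γ hS,
        ← Finset.prod_mul_distrib]
      exact Finset.prod_congr rfl (fun e _ => by
        show rho (σ.1 e + τ.1 e) = _
        rw [rho_add])
  have key := griffithsII (G := G) (C2_finite m N).toFinset (fun _ => β)
    (fun _ _ => hβ) (fun p (σ : G) => rho (dOne σ.1 p)) (fun p _ => hchar p)
    (fun σ : G => wilson m γ₁ σ.1) (fun σ : G => wilson m γ₂ σ.1)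
    (hwchar γ₁ hS1) (hwchar γ₂ hS2)
  have hw : ∀ σ : G,
      (∏ p ∈ (C2_finite m N).toFinset, Real.exp ((fun _ : OPlaq m => β) p *
        (fun p (σ : G) => rho (dOne σ.1 p)) p σ))
      = Real.exp (-β * action m N σ.1) := fun σ => (exp_action m N β σ.1).symm
  simp only [hw] at key
  have hZpos : 0 < ∑ σ : G, Real.exp (-β * action m N σ.1) := by
    haveI : Nonempty G := ⟨0⟩
    exact Finset.sum_pos (fun σ _ => Real.exp_pos _) Finset.univ_nonempty
  rw [ge_iff_le, Ewilson, Ewilson, Eexp, Eexp, Eexp]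
  simp only [sum_omega m N]
  rw [div_mul_div_comm, div_le_div_iff₀ (mul_pos hZpos hZpos) hZpos]
  nlinarith [key, hZpos]

end LGT
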